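/- Every graph G in H₄ \ H₄* satisfies χ(G) = |S₁| + |S₃| + 2 (assuming |S₁| ≥ |S₂|), and moreover |S₂| + 3 ≤ χ(G). -/
import Mathlib


open SimpleGraph

/-- A proper coloring of `G` with colors in `Fin ℓ`. -/
def IsProperColoring {V : Type*} (G : SimpleGraph V) (ℓ : ℕ) (f : V → Fin ℓ) : Prop :=
  ∀ ⦃a b : V⦄, G.Adj a b → f a ≠ f b

/-- A walk in the reconfiguration graph `R_ℓ(G)`: a sequence `c 0, c 1, …, c m` of proper
`ℓ`-colorings of `G` in which consecutive colorings differ on at most one vertex. -/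
def IsRecolorSeq {V : Type*} (G : SimpleGraph V) (ℓ m : ℕ) (c : ℕ → V → Fin ℓ) : Prop :=
  (∀ i ≤ m, IsProperColoring G ℓ (c i)) ∧
    ∀ i < m, ∀ a b : V, a ≠ b → c i a ≠ c (i + 1) a → c i b = c (i + 1) b

/-- The number of times the vertex `a` is recolored along the sequence `c 0, …, c m`. -/
def recolorCount {V : Type*} {ℓ : ℕ} (m : ℕ) (c : ℕ → V → Fin ℓ) (a : V) : ℕ :=
  ((Finset.range m).filter fun i => c i a ≠ c (i + 1) a).card

/-- The cycle `Cₙ` on `Fin n` (for `n ≥ 3`). -/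
def cyc (n : ℕ) [NeZero n] : SimpleGraph (Fin n) := SimpleGraph.fromRel fun a b => a + 1 = b

/-- The graph `P₂ + P₃`, the disjoint union of an edge and a path on three vertices. -/
def p2p3 : SimpleGraph (Fin 5) := SimpleGraph.fromRel fun a b =>
  (a = 0 ∧ b = 1) ∨ (a = 2 ∧ b = 3) ∨ (a = 3 ∧ b = 4)

/-- Adjacency in the 6-cycle on `Fin 6` (indices mod 6). -/
def c6adj (i j : Fin 6) : Prop := i + 1 = j ∨ j + 1 = i

/-- The class `H₄`: six vertices `v 0, …, v 5` inducing a 6-cycle and three mutually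
disjoint cliques `S₁, S₂, S₃` with `S₁` nonempty; `S₁` is complete to `{v₁,v₂,v₃,v₆}`,
`S₂` to `{v₂,v₃,v₄,v₅}`, `S₃` to `{v₁,v₂,v₃,v₄}` and to `S₁ ∪ S₂`; no other edges.
(Here `vᵢ` of the paper is `v (i-1)`.) -/
structure H4Data {V : Type*} (G : SimpleGraph V) where
  v : Fin 6 → V
  S1 : Finset V
  S2 : Finset V
  S3 : Finset V
  inj : Function.Injective v
  notin : ∀ i, v i ∉ S1 ∧ v i ∉ S2 ∧ v i ∉ S3
  d12 : Disjoint S1 S2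
  d13 : Disjoint S1 S3
  d23 : Disjoint S2 S3
  ne1 : S1.Nonempty
  cover : ∀ x : V, (x ∈ S1 ∨ x ∈ S2 ∨ x ∈ S3) ∨ ∃ i, x = v i
  adj_iff : ∀ x y : V, G.Adj x y ↔ x ≠ y ∧
    ((∃ i j : Fin 6, x = v i ∧ y = v j ∧ c6adj i j) ∨
     (x ∈ S1 ∧ y ∈ S1) ∨ (x ∈ S2 ∧ y ∈ S2) ∨ (x ∈ S3 ∧ y ∈ S3) ∨
     (x ∈ S1 ∧ (y = v 0 ∨ y = v 1 ∨ y = v 2 ∨ y = v 5)) ∨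
     (y ∈ S1 ∧ (x = v 0 ∨ x = v 1 ∨ x = v 2 ∨ x = v 5)) ∨
     (x ∈ S2 ∧ (y = v 1 ∨ y = v 2 ∨ y = v 3 ∨ y = v 4)) ∨
     (y ∈ S2 ∧ (x = v 1 ∨ x = v 2 ∨ x = v 3 ∨ x = v 4)) ∨
     (x ∈ S3 ∧ (y = v 0 ∨ y = v 1 ∨ y = v 2 ∨ y = v 3)) ∨
     (y ∈ S3 ∧ (x = v 0 ∨ x = v 1 ∨ x = v 2 ∨ x = v 3)) ∨
     (x ∈ S3 ∧ (y ∈ S1 ∨ y ∈ S2)) ∨ (y ∈ S3 ∧ (x ∈ S1 ∨ x ∈ S2)))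

open Classical in
noncomputable def h4col {V : Type*} {G : SimpleGraph V} (h : H4Data G) (x : V) : ℕ :=
  if hx : x ∈ h.S1 then (Fintype.equivFinOfCardEq (Fintype.card_coe h.S1) ⟨x, hx⟩ : ℕ)
  else if hx : x ∈ h.S2 then (Fintype.equivFinOfCardEq (Fintype.card_coe h.S2) ⟨x, hx⟩ : ℕ)
  else if hx : x ∈ h.S3 then
    h.S1.card + (Fintype.equivFinOfCardEq (Fintype.card_coe h.S3) ⟨x, hx⟩ : ℕ)
  else if x = h.v 1 then h.S1.card + h.S3.card
  else if x = h.v 3 then h.S1.card + h.S3.card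
  else if x = h.v 5 then h.S1.card
  else h.S1.card + h.S3.card + 1

section
variable {V : Type*} {G : SimpleGraph V} (h : H4Data G)

lemma h4col_S1_lt {x : V} (hx : x ∈ h.S1) : h4col h x < h.S1.card := by
  unfold h4col; rw [dif_pos hx]
  exact (Fintype.equivFinOfCardEq (Fintype.card_coe h.S1) ⟨x, hx⟩).isLt

lemma h4col_S1_inj {x y : V} (hx : x ∈ h.S1) (hy : y ∈ h.S1) (hne : x ≠ y) :
    h4col h x ≠ h4col h y := by
  unfold h4col; rw [dif_pos hx, dif_pos hy]
  intro e
  exact hne (Subtype.mk_eq_mk.mp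
    ((Fintype.equivFinOfCardEq (Fintype.card_coe h.S1)).injective (Fin.val_injective e)))

lemma h4col_S2_lt {x : V} (hx : x ∈ h.S2) : h4col h x < h.S2.card := by
  unfold h4col; rw [dif_neg (Finset.disjoint_right.mp h.d12 hx), dif_pos hx]
  exact (Fintype.equivFinOfCardEq (Fintype.card_coe h.S2) ⟨x, hx⟩).isLt

lemma h4col_S2_inj {x y : V} (hx : x ∈ h.S2) (hy : y ∈ h.S2) (hne : x ≠ y) :
    h4col h x ≠ h4col h y := by
  unfold h4col
  rw [dif_neg (Finset.disjoint_right.mp h.d12 hx), dif_pos hx,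
    dif_neg (Finset.disjoint_right.mp h.d12 hy), dif_pos hy]
  intro e
  exact hne (Subtype.mk_eq_mk.mp
    ((Fintype.equivFinOfCardEq (Fintype.card_coe h.S2)).injective (Fin.val_injective e)))

lemma h4col_S3_mem {x : V} (hx : x ∈ h.S3) :
    h.S1.card ≤ h4col h x ∧ h4col h x < h.S1.card + h.S3.card := by
  unfold h4col
  rw [dif_neg (Finset.disjoint_right.mp h.d13 hx),
    dif_neg (Finset.disjoint_right.mp h.d23 hx), dif_pos hx]
  have := (Fintype.equivFinOfCardEq (Fintype.card_coe h.S3) ⟨x, hx⟩).isLt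
  omega

lemma h4col_S3_inj {x y : V} (hx : x ∈ h.S3) (hy : y ∈ h.S3) (hne : x ≠ y) :
    h4col h x ≠ h4col h y := by
  unfold h4col
  rw [dif_neg (Finset.disjoint_right.mp h.d13 hx),
    dif_neg (Finset.disjoint_right.mp h.d23 hx), dif_pos hx,
    dif_neg (Finset.disjoint_right.mp h.d13 hy),
    dif_neg (Finset.disjoint_right.mp h.d23 hy), dif_pos hy]
  intro e
  have e' : (↑(Fintype.equivFinOfCardEq (Fintype.card_coe h.S3) ⟨x, hx⟩) : ℕ) =
      ↑(Fintype.equivFinOfCardEq (Fintype.card_coe h.S3) ⟨y, hy⟩) := by omega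
  exact hne (Subtype.mk_eq_mk.mp
    ((Fintype.equivFinOfCardEq (Fintype.card_coe h.S3)).injective (Fin.val_injective e')))

lemma h4col_v0 : h4col h (h.v 0) = h.S1.card + h.S3.card + 1 := by
  unfold h4col
  rw [dif_neg (h.notin 0).1, dif_neg (h.notin 0).2.1, dif_neg (h.notin 0).2.2,
    if_neg (h.inj.ne (show (0:Fin 6) ≠ 1 by decide)),
    if_neg (h.inj.ne (show (0:Fin 6) ≠ 3 by decide)),
    if_neg (h.inj.ne (show (0:Fin 6) ≠ 5 by decide))]

lemma h4col_v1 : h4col h (h.v 1) = h.S1.card + h.S3.card := by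
  unfold h4col
  rw [dif_neg (h.notin 1).1, dif_neg (h.notin 1).2.1, dif_neg (h.notin 1).2.2, if_pos rfl]

lemma h4col_v2 : h4col h (h.v 2) = h.S1.card + h.S3.card + 1 := by
  unfold h4col
  rw [dif_neg (h.notin 2).1, dif_neg (h.notin 2).2.1, dif_neg (h.notin 2).2.2,
    if_neg (h.inj.ne (show (2:Fin 6) ≠ 1 by decide)),
    if_neg (h.inj.ne (show (2:Fin 6) ≠ 3 by decide)),
    if_neg (h.inj.ne (show (2:Fin 6) ≠ 5 by decide))]

lemma h4col_v3 : h4col h (h.v 3) = h.S1.card + h.S3.card := by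
  unfold h4col
  rw [dif_neg (h.notin 3).1, dif_neg (h.notin 3).2.1, dif_neg (h.notin 3).2.2,
    if_neg (h.inj.ne (show (3:Fin 6) ≠ 1 by decide)), if_pos rfl]

lemma h4col_v4 : h4col h (h.v 4) = h.S1.card + h.S3.card + 1 := by
  unfold h4col
  rw [dif_neg (h.notin 4).1, dif_neg (h.notin 4).2.1, dif_neg (h.notin 4).2.2,
    if_neg (h.inj.ne (show (4:Fin 6) ≠ 1 by decide)),
    if_neg (h.inj.ne (show (4:Fin 6) ≠ 3 by decide)),
    if_neg (h.inj.ne (show (4:Fin 6) ≠ 5 by decide))]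

lemma h4col_v5 : h4col h (h.v 5) = h.S1.card := by
  unfold h4col
  rw [dif_neg (h.notin 5).1, dif_neg (h.notin 5).2.1, dif_neg (h.notin 5).2.2,
    if_neg (h.inj.ne (show (5:Fin 6) ≠ 1 by decide)),
    if_neg (h.inj.ne (show (5:Fin 6) ≠ 3 by decide)), if_pos rfl]

lemma cyc_val_ne (s1 s3 : ℕ) (f : Fin 6 → ℕ)
    (h0 : f 0 = s1+s3+1) (h1 : f 1 = s1+s3) (h2 : f 2 = s1+s3+1)
    (h3 : f 3 = s1+s3) (h4 : f 4 = s1+s3+1) (h5 : f 5 = s1) :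
    ∀ i j : Fin 6, c6adj i j → f i ≠ f j := by
  intro i j hc
  fin_cases i <;> fin_cases j <;> simp_all [c6adj] <;> omega

lemma h4col_cyc : ∀ i j : Fin 6, c6adj i j → h4col h (h.v i) ≠ h4col h (h.v j) :=
  cyc_val_ne h.S1.card h.S3.card (fun i => h4col h (h.v i))
    (h4col_v0 h) (h4col_v1 h) (h4col_v2 h) (h4col_v3 h) (h4col_v4 h) (h4col_v5 h)

lemma h4col_proper (hge : h.S2.card ≤ h.S1.card) :
    ∀ x y : V, G.Adj x y → h4col h x ≠ h4col h y := by
  intro x y hxy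
  rw [h.adj_iff] at hxy
  obtain ⟨hne, hd⟩ := hxy
  have hv0 := h4col_v0 h
  have hv1 := h4col_v1 h
  have hv2 := h4col_v2 h
  have hv3 := h4col_v3 h
  have hv4 := h4col_v4 h
  have hv5 := h4col_v5 h
  rcases hd with ⟨i, j, rfl, rfl, hcc⟩ | ⟨hx, hy⟩ | ⟨hx, hy⟩ | ⟨hx, hy⟩ | ⟨hx, hy⟩ |
    ⟨hy, hx⟩ | ⟨hx, hy⟩ | ⟨hy, hx⟩ | ⟨hx, hy⟩ | ⟨hy, hx⟩ | ⟨hx, hy⟩ | ⟨hy, hx⟩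
  · exact h4col_cyc h i j hcc
  · exact h4col_S1_inj h hx hy hne
  · exact h4col_S2_inj h hx hy hne
  · exact h4col_S3_inj h hx hy hne
  · have hb := h4col_S1_lt h hx
    rcases hy with rfl | rfl | rfl | rfl <;> omega
  · have hb := h4col_S1_lt h hy
    rcases hx with rfl | rfl | rfl | rfl <;> omega
  · have hb := h4col_S2_lt h hx
    rcases hy with rfl | rfl | rfl | rfl <;> omega
  · have hb := h4col_S2_lt h hy
    rcases hx with rfl | rfl | rfl | rfl <;> omega
  · have hb := h4col_S3_mem h hx
    rcases hy with rfl | rfl | rfl | rfl <;> omega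
  · have hb := h4col_S3_mem h hy
    rcases hx with rfl | rfl | rfl | rfl <;> omega
  · obtain ⟨hb1, hb2⟩ := h4col_S3_mem h hx
    rcases hy with hy | hy
    · have := h4col_S1_lt h hy; omega
    · have := h4col_S2_lt h hy; omega
  · obtain ⟨hb1, hb2⟩ := h4col_S3_mem h hy
    rcases hx with hx | hx
    · have := h4col_S1_lt h hx; omega
    · have := h4col_S2_lt h hx; omega

lemma h4col_lt (hge : h.S2.card ≤ h.S1.card) (x : V) :
    h4col h x < h.S1.card + h.S3.card + 2 := by
  rcases h.cover x with (hx | hx | hx) | ⟨i, rfl⟩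
  · have := h4col_S1_lt h hx; omega
  · have := h4col_S2_lt h hx; omega
  · have := h4col_S3_mem h hx; omega
  · have hall : h4col h (h.v i) ≤ h.S1.card + h.S3.card + 1 := by
      fin_cases i
      · exact le_of_eq (h4col_v0 h)
      · exact (h4col_v1 h).le.trans (by omega)
      · exact le_of_eq (h4col_v2 h)
      · exact (h4col_v3 h).le.trans (by omega)
      · exact le_of_eq (h4col_v4 h)
      · exact (h4col_v5 h).le.trans (by omega)
    omega

end

/-- for `G ∈ H₄ \ H₄*` with `|S₁| ≥ |S₂|`, `χ(G) = |S₁| + |S₃| + 2`,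
and moreover `|S₂| + 3 ≤ χ(G)`. -/
theorem stmt12 {V : Type*} [Fintype V] {G : SimpleGraph V} (h : H4Data G)
    (hstar : ¬ (h.S3 = ∅ ∧ h.S1.card = h.S2.card)) (hge : h.S2.card ≤ h.S1.card) :
    G.chromaticNumber = ((h.S1.card + h.S3.card + 2 : ℕ) : ℕ∞) ∧
    ((h.S2.card + 3 : ℕ) : ℕ∞) ≤ G.chromaticNumber := by
  classical
  -- upper bound
  have hup : G.chromaticNumber ≤ ((h.S1.card + h.S3.card + 2 : ℕ) : ℕ∞) := by
    have C : G.Coloring (Fin (h.S1.card + h.S3.card + 2)) :=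
      SimpleGraph.Coloring.mk (fun x => ⟨h4col h x, h4col_lt h hge x⟩)
        (fun {a b} hab => by
          simpa [Fin.ext_iff] using h4col_proper h hge a b hab)
    have := C.colorable.chromaticNumber_le
    simpa using this
  -- lower bound : clique
  have hv12 : h.v 1 ≠ h.v 2 := h.inj.ne (by decide)
  set T : Finset V := (h.S1 ∪ h.S3) ∪ {h.v 1, h.v 2} with hT
  have hdisj : Disjoint (h.S1 ∪ h.S3) ({h.v 1, h.v 2} : Finset V) := by
    rw [Finset.disjoint_right]
    intro a ha
    simp only [Finset.mem_insert, Finset.mem_singleton] at ha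
    rcases ha with rfl | rfl <;>
      simp [Finset.mem_union, (h.notin 1).1, (h.notin 1).2.2, (h.notin 2).1, (h.notin 2).2.2]
  have hcardT : T.card = h.S1.card + h.S3.card + 2 := by
    rw [hT, Finset.card_union_of_disjoint hdisj, Finset.card_union_of_disjoint h.d13,
      Finset.card_pair hv12]
  have hclique : G.IsClique (↑T : Set V) := by
    intro x hx y hy hne
    have hc12 : c6adj 1 2 := Or.inl rfl
    have hc21 : c6adj 2 1 := Or.inr rfl
    simp only [hT, Finset.coe_union, Set.mem_union, Finset.mem_coe, Finset.coe_insert,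
      Set.mem_insert_iff, Finset.coe_singleton, Set.mem_singleton_iff] at hx hy
    rw [h.adj_iff]
    refine ⟨hne, ?_⟩
    rcases hx with (hx | hx) | hx | hx <;> rcases hy with (hy | hy) | hy | hy
    · exact Or.inr (Or.inl ⟨hx, hy⟩)
    · exact Or.inr (Or.inr (Or.inr (Or.inr (Or.inr (Or.inr (Or.inr (Or.inr (Or.inr
        (Or.inr (Or.inr ⟨hy, Or.inl hx⟩))))))))))
    · exact Or.inr (Or.inr (Or.inr (Or.inr (Or.inl ⟨hx, Or.inr (Or.inl hy)⟩))))
    · exact Or.inr (Or.inr (Or.inr (Or.inr (Or.inl ⟨hx, Or.inr (Or.inr (Or.inl hy))⟩))))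
    · exact Or.inr (Or.inr (Or.inr (Or.inr (Or.inr (Or.inr (Or.inr (Or.inr (Or.inr
        (Or.inr (Or.inl ⟨hx, Or.inl hy⟩))))))))))
    · exact Or.inr (Or.inr (Or.inr (Or.inl ⟨hx, hy⟩)))
    · exact Or.inr (Or.inr (Or.inr (Or.inr (Or.inr (Or.inr (Or.inr (Or.inr (Or.inl
        ⟨hx, Or.inr (Or.inl hy)⟩))))))))
    · exact Or.inr (Or.inr (Or.inr (Or.inr (Or.inr (Or.inr (Or.inr (Or.inr (Or.inl
        ⟨hx, Or.inr (Or.inr (Or.inl hy))⟩))))))))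
    · exact Or.inr (Or.inr (Or.inr (Or.inr (Or.inr (Or.inl ⟨hy, Or.inr (Or.inl hx)⟩)))))
    · exact Or.inr (Or.inr (Or.inr (Or.inr (Or.inr (Or.inr (Or.inr (Or.inr (Or.inr
        (Or.inl ⟨hy, Or.inr (Or.inl hx)⟩)))))))))
    · exact absurd (hx.trans hy.symm) hne
    · exact Or.inl ⟨1, 2, hx, hy, hc12⟩
    · exact Or.inr (Or.inr (Or.inr (Or.inr (Or.inr (Or.inl
        ⟨hy, Or.inr (Or.inr (Or.inl hx))⟩)))))
    · exact Or.inr (Or.inr (Or.inr (Or.inr (Or.inr (Or.inr (Or.inr (Or.inr (Or.inr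
        (Or.inl ⟨hy, Or.inr (Or.inr (Or.inl hx))⟩)))))))))
    · exact Or.inl ⟨2, 1, hx, hy, hc21⟩
    · exact absurd (hx.trans hy.symm) hne
  have hlow : ((h.S1.card + h.S3.card + 2 : ℕ) : ℕ∞) ≤ G.chromaticNumber := by
    have := hclique.card_le_chromaticNumber
    rwa [hcardT] at this
  have heq : G.chromaticNumber = ((h.S1.card + h.S3.card + 2 : ℕ) : ℕ∞) :=
    le_antisymm hup hlow
  refine ⟨heq, ?_⟩
  have harith : h.S2.card + 3 ≤ h.S1.card + h.S3.card + 2 := by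
    rcases Nat.eq_zero_or_pos h.S3.card with h0 | h0
    · have hemp : h.S3 = ∅ := Finset.card_eq_zero.mp h0
      have : h.S1.card ≠ h.S2.card := fun e => hstar ⟨hemp, e⟩
      omega
    · omega
  rw [heq]
  exact_mod_cast Nat.cast_le.mpr harith
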